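/- With C_k^{i_1,...,i_n} as above, in the Weyl algebra A_n(ℂ) one has ∏_{j=0}^{k-1} (Σ_{i=1}^n x_i ∂/∂x_i + j + n) = Σ_{i_1+...+i_n=k} C_k^{i_1,...,i_n} (∂/∂x_1)^{i_1}···(∂/∂x_n)^{i_n} x_1^{i_1}···x_n^{i_n} (i.e., the transposed identity, with derivatives on the left and monomials on the right). -/

import Mathlib

open MvPolynomial

/-- The Weyl algebra `A_n(ℂ)` realized faithfully as operators on `ℂ[x₁,…,xₙ]` :
multiplication by a polynomial. -/
noncomputable def Mx (n : ℕ) (q : MvPolynomial (Fin n) ℂ) :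
    Module.End ℂ (MvPolynomial (Fin n) ℂ) := LinearMap.mulLeft ℂ q

/-- The partial derivative `∂/∂xᵢ` as an operator on `ℂ[x₁,…,xₙ]`. -/
noncomputable def Dx (n : ℕ) (i : Fin n) : Module.End ℂ (MvPolynomial (Fin n) ℂ) :=
  (pderiv i : Derivation ℂ (MvPolynomial (Fin n) ℂ) (MvPolynomial (Fin n) ℂ))

variable (n : ℕ)

lemma Mx_mul (p q : MvPolynomial (Fin n) ℂ) : Mx n (p * q) = Mx n p * Mx n q := by
  ext r; simp [Mx, mul_assoc]

lemma Mx_one : Mx n 1 = 1 := by ext q; simp [Mx]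

lemma Mx_smul (c : ℂ) (p : MvPolynomial (Fin n) ℂ) : Mx n (c • p) = c • Mx n p := by
  ext q; simp [Mx, smul_mul_assoc]

lemma Dx_comm (a b : Fin n) : Commute (Dx n a) (Dx n b) := by
  unfold Commute SemiconjBy
  apply MvPolynomial.linearMap_ext
  intro s
  refine LinearMap.ext fun c => ?_
  simp only [Module.End.mul_apply, LinearMap.comp_apply, Module.End.one_apply, Dx,
    Derivation.coeFn_coe, pderiv_monomial]
  by_cases h : a = b
  · subst h; rfl
  · rw [Finsupp.tsub_apply, Finsupp.tsub_apply, Finsupp.single_apply, Finsupp.single_apply,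
      if_neg (fun e => h e.symm), if_neg (fun e => h e), tsub_zero, tsub_zero,
      tsub_tsub, tsub_tsub, add_comm, mul_right_comm]

lemma Dx_Mx (m : Fin n) (p : MvPolynomial (Fin n) ℂ) :
    Dx n m * Mx n p = Mx n p * Dx n m + Mx n (pderiv m p) := by
  ext q
  simp [Dx, Mx, pderiv_mul, mul_comm]

noncomputable def Dop (i : Fin n → ℕ) : Module.End ℂ (MvPolynomial (Fin n) ℂ) :=
  ((List.finRange n).map fun m => Dx n m ^ i m).prod

noncomputable def Xop (i : Fin n → ℕ) : Module.End ℂ (MvPolynomial (Fin n) ℂ) :=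
  Mx n (∏ m, X m ^ i m)

lemma Dop_aux (i : Fin n → ℕ) (m : Fin n) :
    ∀ l : List (Fin n), l.Nodup → m ∈ l →
    ((l.map fun a => Dx n a ^ i a).prod) * Dx n m
      = (l.map fun a => Dx n a ^ ((i + Pi.single m 1 : Fin n → ℕ) a)).prod := by
  intro l
  induction l with
  | nil => intro _ h; simp at h
  | cons a t ih =>
    intro hnd hm
    rw [List.nodup_cons] at hnd
    rcases List.mem_cons.mp hm with h | h
    · subst h
      have hc : Commute (Dx n m) ((t.map fun a => Dx n a ^ i a).prod) := by
        apply Commute.list_prod_right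
        intro x hx
        rcases List.mem_map.mp hx with ⟨b, _, rfl⟩
        exact (Dx_comm n m b).pow_right _
      have ht : (t.map fun a => Dx n a ^ ((i + Pi.single m 1 : Fin n → ℕ) a))
          = t.map fun a => Dx n a ^ i a := by
        apply List.map_congr_left
        intro b hb
        have : b ≠ m := fun e => hnd.1 (e ▸ hb)
        simp [Pi.single_apply, this]
      simp only [List.map_cons, List.prod_cons, ht]
      rw [mul_assoc, ← hc.eq, ← mul_assoc]
      have : (i + Pi.single m 1 : Fin n → ℕ) m = i m + 1 := by simp
      rw [this, pow_succ]
    · simp only [List.map_cons, List.prod_cons, mul_assoc, ih hnd.2 h]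
      have hne : a ≠ m := fun e => (hnd.1 (e ▸ h))
      have : (i + Pi.single m 1 : Fin n → ℕ) a = i a := by
        simp [Pi.single_apply, hne]
      rw [this]

lemma Dop_mul_Dx (i : Fin n → ℕ) (m : Fin n) :
    Dop n i * Dx n m = Dop n (i + Pi.single m 1) :=
  Dop_aux n i m (List.finRange n) (List.nodup_finRange n) (List.mem_finRange m)

lemma Dop_zero : Dop n 0 = 1 := by
  unfold Dop
  rw [List.prod_eq_one]
  intro x hx
  rcases List.mem_map.mp hx with ⟨b, _, rfl⟩
  simp

noncomputable def Fsupp (i : Fin n → ℕ) : Fin n →₀ ℕ := Finsupp.equivFunOnFinite.symm i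

lemma Xop_eq (i : Fin n → ℕ) : Xop n i = Mx n (monomial (Fsupp n i) 1) := by
  unfold Xop
  congr 1
  calc ∏ m : Fin n, X m ^ i m
      = ∏ x ∈ (Fsupp n i).support, (X x ^ i x : MvPolynomial (Fin n) ℂ) := by
        refine (Finset.prod_subset (Finset.subset_univ _) fun x _ hx => ?_).symm
        rw [Finsupp.notMem_support_iff] at hx
        simp only [Fsupp, Finsupp.coe_equivFunOnFinite_symm] at hx
        rw [hx, pow_zero]
    _ = ∏ x ∈ (Fsupp n i).support, X x ^ (Fsupp n i) x :=
        Finset.prod_congr rfl fun x _ => by simp [Fsupp]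
    _ = monomial (Fsupp n i) 1 := prod_X_pow_eq_monomial

lemma Xop_mul_MxX (i : Fin n → ℕ) (m : Fin n) :
    Xop n i * Mx n (X m) = Xop n (i + Pi.single m 1) := by
  unfold Xop
  rw [← Mx_mul]
  congr 1
  have : ∀ a : Fin n, (X a ^ ((i + Pi.single m 1 : Fin n → ℕ) a) : MvPolynomial (Fin n) ℂ)
      = X a ^ i a * X a ^ (Pi.single m 1 : Fin n → ℕ) a := fun a => by
    rw [← pow_add]; rfl
  rw [Finset.prod_congr rfl fun a _ => this a, Finset.prod_mul_distrib]
  congr 1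
  have : ∀ a : Fin n, (X a ^ (Pi.single m 1 : Fin n → ℕ) a : MvPolynomial (Fin n) ℂ)
      = if a = m then X m else 1 := fun a => by
    rcases eq_or_ne a m with h | h <;> simp [h, Pi.single_apply]
  rw [Finset.prod_congr rfl fun a _ => this a, Finset.prod_ite_eq' Finset.univ m]
  simp

lemma Xop_zero : Xop n 0 = 1 := by
  unfold Xop
  simp [Mx_one]

lemma Fsupp_sub (i : Fin n → ℕ) (m : Fin n) :
    Fsupp n i - Finsupp.single m 1 = Fsupp n (Function.update i m (i m - 1)) := by
  ext a
  rw [Finsupp.tsub_apply]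
  rcases eq_or_ne a m with h | h
  · subst h; simp [Fsupp]
  · simp [Fsupp, Finsupp.single_apply, h, Function.update_apply, Ne.symm h]

lemma Xop_Dx (i : Fin n → ℕ) (m : Fin n) :
    Xop n i * Dx n m
      = Dx n m * Xop n i - (i m : ℂ) • Xop n (Function.update i m (i m - 1)) := by
  rw [eq_sub_iff_add_eq, Xop_eq, Xop_eq, ← Mx_smul]
  rw [Dx_Mx, pderiv_monomial]
  congr 1
  rw [Fsupp_sub]
  simp [Fsupp, MvPolynomial.smul_monomial]

noncomputable def Pop (i : Fin n → ℕ) : Module.End ℂ (MvPolynomial (Fin n) ℂ) :=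
  Dop n i * Xop n i

lemma termstep (i : Fin n → ℕ) (m : Fin n) :
    Pop n i * (Dx n m * Mx n (X m))
      = Pop n (i + Pi.single m 1) - (i m : ℂ) • Pop n i := by
  unfold Pop
  rw [← mul_assoc, mul_assoc (Dop n i), Xop_Dx, mul_sub, sub_mul, mul_smul_comm, smul_mul_assoc]
  congr 1
  · rw [← mul_assoc, Dop_mul_Dx, mul_assoc, Xop_mul_MxX]
  · rcases Nat.eq_zero_or_pos (i m) with h | h
    · simp [h]
    · rw [mul_assoc, Xop_mul_MxX]
      have : (Function.update i m (i m - 1) + Pi.single m 1 : Fin n → ℕ) = i := by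
        funext a
        rcases eq_or_ne a m with rfl | hne
        · simp; omega
        · simp [Function.update_apply, hne, Pi.single_apply]
      rw [this]

lemma euler : (∑ i, Mx n (X i) * Dx n i) + (n : ℂ) • (1 : Module.End ℂ (MvPolynomial (Fin n) ℂ))
    = ∑ m, Dx n m * Mx n (X m) := by
  have : ∀ m : Fin n, Dx n m * Mx n (X m) = Mx n (X m) * Dx n m + 1 := fun m => by
    rw [Dx_Mx]; simp [Mx_one]
  rw [Finset.sum_congr rfl fun m _ => this m, Finset.sum_add_distrib]
  congr 1
  simp [Nat.cast_smul_eq_nsmul]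

lemma stepsum (i : Fin n → ℕ) (k : ℕ) (hik : (∑ m, i m) = k) :
    Pop n i * ((∑ m, Dx n m * Mx n (X m)) + (k : ℂ) • 1)
      = ∑ m, Pop n (i + Pi.single m 1) := by
  rw [mul_add, Finset.mul_sum, Finset.sum_congr rfl fun m _ => termstep n i m,
    Finset.sum_sub_distrib]
  have : ∑ m, (i m : ℂ) • Pop n i = (k : ℂ) • Pop n i := by
    rw [← Finset.sum_smul, ← Nat.cast_sum, hik]
  rw [this]
  have : Pop n i * ((k:ℂ) • 1) = (k:ℂ) • Pop n i := by
    rw [mul_smul_comm, mul_one]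
  rw [this]
  abel

noncomputable def Sop (Cc : ℕ → (Fin n → ℕ) → ℤ) (k : ℕ) :
    Module.End ℂ (MvPolynomial (Fin n) ℂ) :=
  ∑ i ∈ Finset.piAntidiag Finset.univ k, (Cc k i : ℂ) • Pop n i

lemma antidiag_one : Finset.piAntidiag (Finset.univ : Finset (Fin n)) 1
    = Finset.univ.image (fun m : Fin n => (Pi.single m 1 : Fin n → ℕ)) := by
  ext i
  simp only [Finset.mem_piAntidiag, Finset.mem_image, Finset.mem_univ, true_and]
  constructor
  · rintro ⟨hsum, -⟩
    have hne : (∑ m, i m) ≠ 0 := by rw [hsum]; omega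
    obtain ⟨m, -, hm⟩ := Finset.exists_ne_zero_of_sum_ne_zero hne
    have hsplit : (∑ a ∈ Finset.univ.erase m, i a) + i m = 1 := by
      rw [Finset.sum_erase_add _ _ (Finset.mem_univ m)]; exact hsum
    have him : i m = 1 := by omega
    have hrest : ∀ a ∈ Finset.univ.erase m, i a = 0 := by
      rw [← Finset.sum_eq_zero_iff]; omega
    refine ⟨m, funext fun a => ?_⟩
    rcases eq_or_ne a m with rfl | h
    · simp [him]
    · rw [Pi.single_apply, if_neg h, (hrest a (by simp [h])).symm]
  · rintro ⟨m, rfl⟩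
    constructor
    · simp [Pi.single_apply]
    · simp

lemma Pop_single (m : Fin n) : Pop n (Pi.single m 1) = Dx n m * Mx n (X m) := by
  unfold Pop
  rw [show (Pi.single m 1 : Fin n → ℕ) = 0 + Pi.single m 1 from (zero_add _).symm,
    ← Dop_mul_Dx, ← Xop_mul_MxX, Dop_zero, Xop_zero, one_mul, one_mul]

lemma Sop_base (Cc : ℕ → (Fin n → ℕ) → ℤ) (hbase : ∀ m : Fin n, Cc 1 (Pi.single m 1) = 1) :
    Sop n Cc 1 = ∑ m, Dx n m * Mx n (X m) := by
  unfold Sop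
  rw [antidiag_one, Finset.sum_image]
  · exact Finset.sum_congr rfl fun m _ => by rw [hbase m, Pop_single]; simp
  · intro a _ b _ h
    by_contra hne
    have := congrFun h a
    dsimp only at this
    rw [Pi.single_eq_same, Pi.single_eq_of_ne hne] at this
    exact one_ne_zero this

lemma Sop_step (Cc : ℕ → (Fin n → ℕ) → ℤ) (k : ℕ) (hk : 1 ≤ k)
    (hrec : ∀ K : ℕ, 2 ≤ K → ∀ i : Fin n → ℕ, (∑ m, i m) = K →
      Cc K i = ∑ m : Fin n,
        if i m = 0 then 0 else Cc (K - 1) (Function.update i m (i m - 1))) :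
    Sop n Cc k * ((∑ m, Dx n m * Mx n (X m)) + (k : ℂ) • 1) = Sop n Cc (k + 1) := by
  unfold Sop
  rw [Finset.sum_mul]
  have h1 : ∀ i ∈ Finset.piAntidiag (Finset.univ : Finset (Fin n)) k,
      ((Cc k i : ℂ) • Pop n i) * ((∑ m, Dx n m * Mx n (X m)) + (k : ℂ) • 1)
        = ∑ m, (Cc k i : ℂ) • Pop n (i + Pi.single m 1) := by
    intro i hi
    rw [Finset.mem_piAntidiag] at hi
    rw [smul_mul_assoc, stepsum n i k hi.1, Finset.smul_sum]
  rw [Finset.sum_congr rfl h1, Finset.sum_comm]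
  have h2 : ∀ j ∈ Finset.piAntidiag (Finset.univ : Finset (Fin n)) (k + 1),
      ((Cc (k + 1) j : ℂ) • Pop n j)
        = ∑ m, (if j m ≠ 0 then
            (Cc k (Function.update j m (j m - 1)) : ℂ) • Pop n j else 0) := by
    intro j hj
    rw [Finset.mem_piAntidiag] at hj
    rw [hrec (k + 1) (by omega) j hj.1]
    push_cast
    rw [Finset.sum_smul]
    refine Finset.sum_congr rfl fun m _ => ?_
    rcases eq_or_ne (j m) 0 with h | h
    · rw [if_pos h, if_neg (by simpa using h), zero_smul]
    · rw [if_neg h, if_pos h]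
  have h2' : ∑ j ∈ Finset.piAntidiag (Finset.univ : Finset (Fin n)) (k + 1),
      ((Cc (k + 1) j : ℂ) • Pop n j)
        = ∑ m, ∑ j ∈ Finset.piAntidiag (Finset.univ : Finset (Fin n)) (k + 1),
          (if j m ≠ 0 then (Cc k (Function.update j m (j m - 1)) : ℂ) • Pop n j else 0) :=
    (Finset.sum_congr rfl h2).trans Finset.sum_comm
  rw [h2']
  refine Finset.sum_congr rfl fun m _ => ?_
  rw [← Finset.sum_filter]
  refine (Finset.sum_nbij' (fun i : Fin n → ℕ => i + Pi.single m 1)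
    (fun j : Fin n → ℕ => Function.update j m (j m - 1)) ?_ ?_ ?_ ?_ ?_)
  · intro i hi
    rw [Finset.mem_piAntidiag] at hi
    rw [Finset.mem_filter, Finset.mem_piAntidiag]
    refine ⟨⟨?_, fun _ _ => Finset.mem_univ _⟩, ?_⟩
    · have h3 : (∑ a, (i a + (Pi.single m 1 : Fin n → ℕ) a)) = k + 1 := by
        rw [Finset.sum_add_distrib, hi.1]
        simp [Pi.single_apply]
      exact h3
    · simp
  · intro j hj
    rw [Finset.mem_filter, Finset.mem_piAntidiag] at hj
    rw [Finset.mem_piAntidiag]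
    refine ⟨?_, fun _ _ => Finset.mem_univ _⟩
    have hs := hj.1.1
    have hm : j m ≠ 0 := hj.2
    rw [Finset.sum_update_of_mem (Finset.mem_univ m), Finset.sdiff_singleton_eq_erase]
    rw [← Finset.sum_erase_add _ _ (Finset.mem_univ m)] at hs
    omega
  · intro i _
    funext a
    rcases eq_or_ne a m with rfl | h
    · simp
    · simp [Function.update_apply, h, Pi.single_apply, h]
  · intro j hj
    rw [Finset.mem_filter] at hj
    funext a
    rcases eq_or_ne a m with rfl | h
    · have := hj.2
      simp only [Pi.add_apply, Function.update_self, Pi.single_eq_same]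
      omega
    · simp [Function.update_apply, h, Pi.single_apply, h]
  · intro i _
    have hupd : Function.update (i + Pi.single m 1 : Fin n → ℕ) m
        ((i + Pi.single m 1 : Fin n → ℕ) m - 1) = i := by
      funext a
      rcases eq_or_ne a m with rfl | h
      · simp
      · simp [Function.update_apply, h, Pi.single_apply, h]
    show (Cc k i : ℂ) • Pop n (i + Pi.single m 1)
        = (Cc k (Function.update (i + Pi.single m 1 : Fin n → ℕ) m
            ((i + Pi.single m 1 : Fin n → ℕ) m - 1)) : ℂ) • Pop n (i + Pi.single m 1)
    rw [hupd]

lemma coelist (K : ℕ) : ((do let a ← List.range K; pure ((a : ℂ))) : List ℂ)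
    = (List.range K).map (fun a : ℕ => (a : ℂ)) := by
  exact List.flatMap_pure_eq_map _ _

theorem stmt1' (k : ℕ) (hk : 1 ≤ k) (Cc : ℕ → (Fin n → ℕ) → ℤ)
    (hbase : ∀ m : Fin n, Cc 1 (Pi.single m 1) = 1)
    (hrec : ∀ K : ℕ, 2 ≤ K → ∀ i : Fin n → ℕ, (∑ m, i m) = K →
      Cc K i = ∑ m : Fin n,
        if i m = 0 then 0 else Cc (K - 1) (Function.update i m (i m - 1))) :
    ((List.range k).map
        (fun j => (∑ i, Mx n (X i) * Dx n i) + ((j : ℂ) + (n : ℂ)) • (1 : Module.End ℂ (MvPolynomial (Fin n) ℂ)))).prod =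
      ∑ f : Fin n → Fin (k + 1),
        if (∑ m, (f m : ℕ)) = k then
          ((Cc k (fun m => (f m : ℕ)) : ℂ) •
            (((List.finRange n).map (fun m => Dx n m ^ (f m : ℕ))).prod *
              Mx n (∏ m, X m ^ (f m : ℕ))))
        else 0 := by
  have hmain : ∀ K : ℕ, 1 ≤ K → ((List.range K).map
      (fun j : ℕ => (∑ i, Mx n (X i) * Dx n i) + ((j : ℂ) + (n : ℂ)) • (1 : Module.End ℂ (MvPolynomial (Fin n) ℂ)))).prod = Sop n Cc K := by
    intro K hK
    induction K, hK using Nat.le_induction with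
    | base =>
      rw [Sop_base n Cc hbase]
      simp only [List.range_succ, List.range_zero, List.nil_append, List.map_cons, List.map_nil,
        List.prod_cons, List.prod_nil, mul_one]
      rw [← euler]
      norm_num
    | succ K hK ih =>
      rw [List.range_succ, List.map_append, List.prod_append, ih]
      simp only [List.map_cons, List.map_nil, List.prod_cons, List.prod_nil, mul_one]
      rw [← Sop_step n Cc K hK hrec]
      congr 1
      rw [← euler, add_smul]
      abel
  have hco : ((List.range k).map
      (fun j => (∑ i, Mx n (X i) * Dx n i) + ((j : ℂ) + (n : ℂ)) • (1 : Module.End ℂ (MvPolynomial (Fin n) ℂ)))).prod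
      = ((List.range k).map
      (fun j : ℕ => (∑ i, Mx n (X i) * Dx n i) + ((j : ℂ) + (n : ℂ)) • (1 : Module.End ℂ (MvPolynomial (Fin n) ℂ)))).prod := by
    rw [coelist, List.map_map]
    rfl
  rw [hco, hmain k hk]
  unfold Sop
  conv_rhs => rw [← Finset.sum_filter]
  refine (Finset.sum_nbij' (fun f : Fin n → Fin (k + 1) => (fun m => (f m : ℕ)))
    (fun i : Fin n → ℕ => (fun m => (⟨min (i m) k, by omega⟩ : Fin (k + 1)))) ?_ ?_ ?_ ?_ ?_).symm
  · intro f hf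
    rw [Finset.mem_filter] at hf
    rw [Finset.mem_piAntidiag]
    exact ⟨hf.2, fun _ _ => Finset.mem_univ _⟩
  · intro i hi
    rw [Finset.mem_piAntidiag] at hi
    rw [Finset.mem_filter]
    refine ⟨Finset.mem_univ _, ?_⟩
    have hle : ∀ a : Fin n, i a ≤ k := fun a => by
      rw [← hi.1]
      exact Finset.single_le_sum (fun _ _ => Nat.zero_le _) (Finset.mem_univ a)
    have : ∀ a : Fin n, ((⟨min (i a) k, by omega⟩ : Fin (k + 1)) : ℕ) = i a := fun a => by
      simp [Nat.min_eq_left (hle a)]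
    rw [Finset.sum_congr rfl fun a _ => this a]
    exact hi.1
  · intro f hf
    rw [Finset.mem_filter] at hf
    have hle : ∀ a : Fin n, (f a : ℕ) ≤ k := fun a => by
      have h1 : (f a : ℕ) ≤ ∑ m, (f m : ℕ) :=
        Finset.single_le_sum (f := fun m => (f m : ℕ)) (fun _ _ => Nat.zero_le _)
          (Finset.mem_univ a)
      omega
    funext a
    exact Fin.ext (by simp [Nat.min_eq_left (hle a)])
  · intro i hi
    rw [Finset.mem_piAntidiag] at hi
    have hle : ∀ a : Fin n, i a ≤ k := fun a => by
      rw [← hi.1]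
      exact Finset.single_le_sum (fun _ _ => Nat.zero_le _) (Finset.mem_univ a)
    funext a
    simp [Nat.min_eq_left (hle a)]
  · intro f hf
    rfl

/-- Statement 0: if the integers `C_k^{i₁,…,iₙ}` satisfy the recurrence
`C_k^{i₁,…,iₙ} = ∑_m C_{k-1}^{…,i_m-1,…}` (terms with a negative index being zero)
with `C_1` equal to `1` on the standard basis tuples, then in the Weyl algebra
`∏_{j=0}^{k-1} (∑ᵢ xᵢ∂ᵢ + j + n) = ∑_{i₁+⋯+iₙ=k} C_k^{i₁,…,iₙ} ∂₁^{i₁}⋯∂ₙ^{iₙ} x₁^{i₁}⋯xₙ^{iₙ}`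
(the transposed identity). -/
theorem stmt1 (n k : ℕ) (hk : 1 ≤ k) (Cc : ℕ → (Fin n → ℕ) → ℤ)
    (hbase : ∀ m : Fin n, Cc 1 (Pi.single m 1) = 1)
    (hrec : ∀ K : ℕ, 2 ≤ K → ∀ i : Fin n → ℕ, (∑ m, i m) = K →
      Cc K i = ∑ m : Fin n,
        if i m = 0 then 0 else Cc (K - 1) (Function.update i m (i m - 1))) :
    ((List.range k).map
        (fun j => (∑ i, Mx n (X i) * Dx n i) + ((j : ℂ) + (n : ℂ)) • (1 : Module.End ℂ (MvPolynomial (Fin n) ℂ)))).prod =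
      ∑ f : Fin n → Fin (k + 1),
        if (∑ m, (f m : ℕ)) = k then
          ((Cc k (fun m => (f m : ℕ)) : ℂ) •
            (((List.finRange n).map (fun m => Dx n m ^ (f m : ℕ))).prod *
              Mx n (∏ m, X m ^ (f m : ℕ))))
        else 0 := stmt1' n k hk Cc hbase hrec
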